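/- For m ≥ 1 and n ≥ 2, the second entry of the n-th row of the m-th order Eulerian triangle equals T^(m)_{n,1} = m·(2^n - n - 1). -/
import Mathlib


/-- The `m`th-order Eulerian numbers `T^(m)_{n,k}`, with integer descent index `k`
(so `T^(m)_{n,k} = 0` for `k < 0` or `k ≥ n`). -/
def eulerianT (m : ℕ) : ℕ → ℤ → ℤ
  | 0, _ => 0
  | 1, k => if k = 0 then 1 else 0
  | n + 2, k =>
      if k < 0 ∨ (n : ℤ) + 2 ≤ k then 0
      else (k + 1) * eulerianT m (n + 1) k +
        ((m : ℤ) * ((n : ℤ) + 2) - k - (m : ℤ) + 1) * eulerianT m (n + 1) (k - 1)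

lemma eulerianT_neg (m : ℕ) (n : ℕ) (k : ℤ) (hk : k < 0) : eulerianT m n k = 0 := by
  match n with
  | 0 => simp [eulerianT]
  | 1 => simp [eulerianT]; omega
  | n + 2 => simp [eulerianT]; intro h; omega

lemma eulerianT_zero (m : ℕ) (n : ℕ) (hn : 1 ≤ n) : eulerianT m n 0 = 1 := by
  induction n with
  | zero => omega
  | succ n ih =>
    match n with
    | 0 => simp [eulerianT]
    | n + 1 =>
      rw [show n + 1 + 1 = n + 2 from rfl, eulerianT]
      norm_num
      rw [eulerianT_neg m (n + 1) (-1) (by norm_num)]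
      rw [ih (by omega)]
      simp
      omega

theorem eulerianT_second_entry (m n : ℕ) (hm : 1 ≤ m) (hn : 2 ≤ n) :
    eulerianT m n 1 = (m : ℤ) * (2 ^ n - (n : ℤ) - 1) := by
  induction n with
  | zero => omega
  | succ n ih =>
    match n, hn with
    | 1, _ =>
      rw [show (1:ℕ) + 1 = 0 + 2 from rfl, eulerianT]
      simp [eulerianT]
      ring
    | n + 2, _ =>
      rw [show n + 2 + 1 = (n + 1) + 2 from rfl, eulerianT]
      have h : ¬ ((1:ℤ) < 0 ∨ ((n + 1 : ℕ) : ℤ) + 2 ≤ 1) := by omega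
      rw [if_neg h]
      norm_num
      rw [ih (by omega), eulerianT_zero m (n + 2) (by omega)]
      push_cast
      ring
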